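/- If ρ₂/ρ₁ = ρ₃/ρ₂ and the layer depths satisfy H₂/H = −(1 + (ρ₃/ρ₁)^(1/2))·H₁/H + 1 with H = H₁+H₂+H₃, then the criticality condition ρ₃γ³/H₃² + ρ₂(1−γ)³/H₂² − ρ₁/H₁² = 0 is satisfied for the mode-1 displacement ratio γ = γ⁺. -/

import Mathlib

set_option maxHeartbeats 1000000

/-- If `ρ₂/ρ₁ = ρ₃/ρ₂` and `H₂/H = −(1+√(ρ₃/ρ₁))H₁/H + 1`, the KdV criticality
condition holds for the mode-1 displacement ratio `γ⁺` (defined from the larger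
root of the linear long wave speed equation). -/
theorem stmt_17 (ρ1 ρ2 ρ3 H1 H2 H3 g c0 γ : ℝ)
    (hρ1 : 0 < ρ1) (hρ12 : ρ1 < ρ2) (hρ23 : ρ2 < ρ3)
    (hρ : ρ2^2 = ρ1*ρ3)
    (hH1 : 0 < H1) (hH2 : 0 < H2) (hH3 : 0 < H3) (hg : 0 < g)
    (hdepth : H2/(H1+H2+H3)
      = -(1 + Real.sqrt (ρ3/ρ1)) * (H1/(H1+H2+H3)) + 1)
    (hc0 : 0 < c0)
    (hroot : ((ρ1*H2 + ρ2*H1)*c0^2 - g*(ρ2-ρ1)*H1*H2) *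
        ((ρ2*H3 + ρ3*H2)*c0^2 - g*(ρ3-ρ2)*H2*H3) - ρ2^2*H1*H3*c0^4 = 0)
    (hmax : ∀ c : ℝ, 0 < c →
      ((ρ1*H2 + ρ2*H1)*c^2 - g*(ρ2-ρ1)*H1*H2) *
        ((ρ2*H3 + ρ3*H2)*c^2 - g*(ρ3-ρ2)*H2*H3) - ρ2^2*H1*H3*c^4 = 0 → c ≤ c0)
    (hγ : γ = 1 + ρ1*H2/(ρ2*H1) - g*((ρ2-ρ1)/ρ2)*H2/c0^2) :
    ρ3*γ^3/H3^2 + ρ2*(1-γ)^3/H2^2 - ρ1/H1^2 = 0 := by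
  have hρ2 : (0:ℝ) < ρ2 := by linarith
  have hρ3 : (0:ℝ) < ρ3 := by linarith
  have hH : (0:ℝ) < H1 + H2 + H3 := by linarith
  have hsqrt : Real.sqrt (ρ3/ρ1) = ρ2/ρ1 := by
    rw [show ρ3/ρ1 = (ρ2/ρ1)^2 by field_simp; linear_combination -hρ]
    exact Real.sqrt_sq (by positivity)
  rw [hsqrt] at hdepth
  have hH3e : ρ1 * H3 = ρ2 * H1 := by
    field_simp at hdepth
    have h2 : (H2*ρ1)*(H1+H2+H3) = ((-ρ2 + -ρ1)*H1 + ρ1*(H1+H2+H3))*(H1+H2+H3) := by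
      linear_combination (H1+H2+H3)*hdepth
    have h3 := mul_right_cancel₀ (ne_of_gt hH) h2
    linarith
  have hρ3s : ρ3 = ρ2^2/ρ1 := by field_simp; linear_combination -hρ
  have hH3s : H3 = ρ2*H1/ρ1 := by field_simp; linarith
  -- factorization of the quadratic at c0
  have hfac : (ρ1*c0^2 - g*(ρ2-ρ1)*H1) *
      (((ρ1+ρ2)*H1 + ρ1*H2)*c0^2 - g*(ρ2-ρ1)*H1*H2) = 0 := by
    rw [hρ3s, hH3s] at hroot
    field_simp at hroot
    have h2 : ρ1^2*ρ2^2*H2 * ((ρ1*c0^2 - g*(ρ2-ρ1)*H1) *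
        (((ρ1+ρ2)*H1 + ρ1*H2)*c0^2 - g*(ρ2-ρ1)*H1*H2)) = 0 := by
      linear_combination ρ1^2 * hroot
    have hne : ρ1^2*ρ2^2*H2 ≠ 0 := by positivity
    exact (mul_eq_zero.mp h2).resolve_left hne
  -- the larger root
  have hd : (0:ℝ) < ρ2 - ρ1 := by linarith
  have ha : (0:ℝ) < g*(ρ2-ρ1)*H1 := by positivity
  set x : ℝ := Real.sqrt (g*(ρ2-ρ1)*H1/ρ1) with hx_def
  have hxpos : 0 < x := Real.sqrt_pos.mpr (by positivity)
  have hc2 : ρ1 * x^2 = g*(ρ2-ρ1)*H1 := by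
    rw [hx_def, Real.sq_sqrt (by positivity)]
    field_simp
  have hcle : x ≤ c0 := by
    apply hmax _ hxpos
    rw [hρ3s, hH3s]
    field_simp
    linear_combination (ρ2^2*H2*(((ρ1+ρ2)*H1+ρ1*H2)*x^2 - g*(ρ2-ρ1)*H1*H2)) * hc2
  have hge : g*(ρ2-ρ1)*H1 ≤ ρ1 * c0^2 := by
    have h2 : x^2 ≤ c0^2 := by
      apply pow_le_pow_left₀ hxpos.le hcle
    nlinarith
  have key : ρ1 * c0^2 = g*(ρ2-ρ1)*H1 := by
    rcases mul_eq_zero.mp hfac with h | h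
    · linarith
    · have hb : (0:ℝ) < (ρ1+ρ2)*H1 + ρ1*H2 := by positivity
      have h2 : ((ρ1+ρ2)*H1 + ρ1*H2) * (g*(ρ2-ρ1)*H1) ≤
          ((ρ1+ρ2)*H1 + ρ1*H2) * (ρ1*c0^2) := by
        exact mul_le_mul_of_nonneg_left hge hb.le
      have h3 : ρ1 * (((ρ1+ρ2)*H1 + ρ1*H2)*c0^2 - g*(ρ2-ρ1)*H1*H2) = 0 := by
        rw [h]; ring
      have h4 : ((ρ1+ρ2)*H1+ρ1*H2)*(ρ1*c0^2) = ρ1*(g*(ρ2-ρ1)*H1*H2) := by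
        linear_combination ρ1*h
      nlinarith [h2, h4, mul_pos (mul_pos ha hH1) (add_pos hρ1 hρ2)]
  have hγ1 : γ = 1 := by
    rw [hγ]
    have hc0ne : c0 ≠ 0 := ne_of_gt hc0
    field_simp
    linear_combination H2 * key
  rw [hγ1]
  have hq : ρ3 * H1^2 = ρ1 * H3^2 := by
    have h2 : ρ1 * (ρ3 * H1^2) = ρ1 * (ρ1 * H3^2) := by
      linear_combination -H1^2 * hρ - (ρ1*H3 + ρ2*H1) * hH3e
    exact mul_left_cancel₀ (ne_of_gt hρ1) h2
  field_simp
  linear_combination H2^2 * hq
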